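/- Let d, m_1, …, m_r (r ≥ 4) be natural numbers with m_i ≤ d for i = 1, 2, 3, 4 and 2d ≥ m_i + m_j + m_l for every three-element subset {i,j,l} ⊆ {1,2,3,4}. Set k = 2d − (m_1 + m_2 + m_3 + m_4) and t_{ij} = m_i + m_j − d for 1 ≤ i < j ≤ 4, and define the virtual dimensions v = C(d+3,3) − Σ_{i=1}^{r} C(m_i+2,3) − 1 and v' = C(d+k+3,3) − Σ_{i=1}^{4} C(m_i+k+2,3) − Σ_{i=5}^{r} C(m_i+2,3) − 1. Then v' − v = Σ_{1 ≤ i < j ≤ 4, t_{ij} ≥ 2} C(1 + t_{ij}, 3) − Σ_{1 ≤ i < j ≤ 4, t_{ij} ≤ −2} C(1 − t_{ij}, 3). -/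

import Mathlib

def intChoose3 (n : ℤ) : ℤ := n * (n - 1) * (n - 2) / 6

lemma six_dvd (n : ℤ) : (6 : ℤ) ∣ n * (n - 1) * (n - 2) := by
  have h : n % 6 = 0 ∨ n % 6 = 1 ∨ n % 6 = 2 ∨ n % 6 = 3 ∨ n % 6 = 4 ∨ n % 6 = 5 := by omega
  obtain ⟨q, hq⟩ : ∃ q, n = 6 * q + n % 6 := ⟨n / 6, by omega⟩
  rcases h with h|h|h|h|h|h <;> rw [hq, h]
  · exact ⟨q * (6*q - 1) * (6*q - 2), by ring⟩
  · exact ⟨(6*q+1) * q * (6*q - 1), by ring⟩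
  · exact ⟨(3*q+1) * (6*q+1) * (2*q), by ring⟩
  · exact ⟨(2*q+1) * (3*q+1) * (6*q+1), by ring⟩
  · exact ⟨(3*q+2)*(2*q+1)*(6*q+2), by ring⟩
  · exact ⟨(6*q+5)*(3*q+2)*(2*q+1), by ring⟩

lemma mul6 (n : ℤ) : 6 * intChoose3 n = n * (n - 1) * (n - 2) := by
  obtain ⟨c, hc⟩ := six_dvd n
  rw [intChoose3, hc, Int.mul_ediv_cancel_left _ (by norm_num)]

lemma gsimp (s : ℤ) :
    (if 2 ≤ s then intChoose3 (1 + s) else 0) -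
      (if s ≤ -2 then intChoose3 (1 - s) else 0) = intChoose3 (1 + s) := by
  have h1 := mul6 (1 + s)
  have h2 := mul6 (1 - s)
  by_cases hs : 2 ≤ s
  · rw [if_pos hs, if_neg (by omega)]; ring
  · by_cases hs' : s ≤ -2
    · rw [if_neg hs, if_pos hs']
      have h3 : (1+s) * (1+s-1) * (1+s-2) = -((1-s)*(1-s-1)*(1-s-2)) := by ring
      omega
    · rw [if_neg hs, if_neg hs']
      have hl : s = -1 ∨ s = 0 ∨ s = 1 := by omega
      rcases hl with h|h|h <;> subst h <;> norm_num at h1 ⊢ <;> omega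

lemma sum_first_four {r : ℕ} (hr : 4 ≤ r) (f : Fin r → ℤ)
    (hf : ∀ i : Fin r, 4 ≤ (i : ℕ) → f i = 0) :
    ∑ i : Fin r, f i = ∑ j : Fin 4, f (Fin.castLE hr j) := by
  have h1 : ∑ j : Fin 4, f (Fin.castLE hr j)
      = ∑ i ∈ Finset.univ.map (Fin.castLEEmb hr), f i := by
    rw [Finset.sum_map]; rfl
  rw [h1]
  symm
  apply Finset.sum_subset (Finset.subset_univ _)
  intro x _ hx
  apply hf
  by_contra hc
  push_neg at hc
  exact hx (Finset.mem_map.mpr ⟨⟨x, hc⟩, Finset.mem_univ _, rfl⟩)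

theorem virtual_dimension_change
    (r : ℕ) (hr : 4 ≤ r) (d : ℕ) (m : Fin r → ℕ)
    (hm : ∀ i : Fin 4, m (Fin.castLE hr i) ≤ d)
    (h3 : ∀ i j l : Fin 4, i ≠ j → i ≠ l → j ≠ l →
      (m (Fin.castLE hr i) : ℤ) + m (Fin.castLE hr j) + m (Fin.castLE hr l) ≤ 2 * d) :
    let k : ℤ := 2 * d - ∑ i : Fin 4, (m (Fin.castLE hr i) : ℤ)
    let t : Fin 4 → Fin 4 → ℤ :=
      fun i j => (m (Fin.castLE hr i) : ℤ) + m (Fin.castLE hr j) - d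
    let v : ℤ := intChoose3 ((d : ℤ) + 3) - ∑ i : Fin r, intChoose3 ((m i : ℤ) + 2) - 1
    let v' : ℤ := intChoose3 ((d : ℤ) + k + 3) -
      (∑ i : Fin r, if (i : ℕ) < 4 then intChoose3 ((m i : ℤ) + k + 2)
        else intChoose3 ((m i : ℤ) + 2)) - 1
    v' - v =
      ∑ p ∈ Finset.univ.filter (fun p : Fin 4 × Fin 4 => p.1 < p.2),
        ((if 2 ≤ t p.1 p.2 then intChoose3 (1 + t p.1 p.2) else 0) -
          (if t p.1 p.2 ≤ -2 then intChoose3 (1 - t p.1 p.2) else 0)) := by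
  dsimp only
  set k : ℤ := 2 * d - ∑ i : Fin 4, (m (Fin.castLE hr i) : ℤ) with hk
  -- simplify RHS
  simp only [gsimp]
  rw [Finset.sum_filter]
  rw [show (Finset.univ : Finset (Fin 4 × Fin 4)) = Finset.univ ×ˢ Finset.univ from rfl,
    Finset.sum_product]
  simp only [Fin.sum_univ_four]
  norm_num [Fin.lt_def, show ((0:Fin 4):ℕ) = 0 from rfl, show ((1:Fin 4):ℕ) = 1 from rfl,
    show ((2:Fin 4):ℕ) = 2 from rfl, show ((3:Fin 4):ℕ) = 3 from rfl]
  -- simplify LHS sums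
  have hL : (∑ i : Fin r, if (i : ℕ) < 4 then intChoose3 ((m i : ℤ) + k + 2)
        else intChoose3 ((m i : ℤ) + 2)) - ∑ i : Fin r, intChoose3 ((m i : ℤ) + 2)
      = ∑ j : Fin 4, (intChoose3 ((m (Fin.castLE hr j) : ℤ) + k + 2)
          - intChoose3 ((m (Fin.castLE hr j) : ℤ) + 2)) := by
    rw [← Finset.sum_sub_distrib]
    rw [sum_first_four hr (f := fun i => (if (i : ℕ) < 4 then intChoose3 ((m i : ℤ) + k + 2)
        else intChoose3 ((m i : ℤ) + 2)) - intChoose3 ((m i : ℤ) + 2))]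
    · apply Finset.sum_congr rfl
      intro j _
      rw [if_pos]
      simpa using j.isLt
    · intro i hi
      rw [if_neg (by omega)]
      ring
  set a := (m (Fin.castLE hr 0) : ℤ) with ha
  set b := (m (Fin.castLE hr 1) : ℤ) with hb
  set c := (m (Fin.castLE hr 2) : ℤ) with hc
  set e := (m (Fin.castLE hr 3) : ℤ) with he
  rw [Fin.sum_univ_four] at hk hL
  have key : intChoose3 ((d:ℤ) + k + 3) - intChoose3 ((d:ℤ) + 3) -
      ((intChoose3 (a + k + 2) - intChoose3 (a + 2)) + (intChoose3 (b + k + 2) - intChoose3 (b + 2)) +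
       (intChoose3 (c + k + 2) - intChoose3 (c + 2)) + (intChoose3 (e + k + 2) - intChoose3 (e + 2)))
      = intChoose3 (1 + (a + b - d)) + intChoose3 (1 + (a + c - d)) + intChoose3 (1 + (a + e - d)) +
        intChoose3 (1 + (b + c - d)) + intChoose3 (1 + (b + e - d)) + intChoose3 (1 + (c + e - d)) := by
    rw [hk]
    have e1 := mul6 ((d:ℤ) + (2 * d - (a + b + c + e)) + 3)
    have e2 := mul6 ((d:ℤ) + 3)
    have e3 := mul6 (a + (2 * (d:ℤ) - (a + b + c + e)) + 2)
    have e4 := mul6 (b + (2 * (d:ℤ) - (a + b + c + e)) + 2)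
    have e5 := mul6 (c + (2 * (d:ℤ) - (a + b + c + e)) + 2)
    have e6 := mul6 (e + (2 * (d:ℤ) - (a + b + c + e)) + 2)
    have e7 := mul6 (a + 2)
    have e8 := mul6 (b + 2)
    have e9 := mul6 (c + 2)
    have e10 := mul6 (e + 2)
    have f1 := mul6 (1 + (a + b - (d:ℤ)))
    have f2 := mul6 (1 + (a + c - (d:ℤ)))
    have f3 := mul6 (1 + (a + e - (d:ℤ)))
    have f4 := mul6 (1 + (b + c - (d:ℤ)))
    have f5 := mul6 (1 + (b + e - (d:ℤ)))
    have f6 := mul6 (1 + (c + e - (d:ℤ)))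
    have h6 : 6 * (intChoose3 ((d:ℤ) + (2 * d - (a + b + c + e)) + 3) - intChoose3 ((d:ℤ) + 3) -
      ((intChoose3 (a + (2 * (d:ℤ) - (a + b + c + e)) + 2) - intChoose3 (a + 2)) +
       (intChoose3 (b + (2 * (d:ℤ) - (a + b + c + e)) + 2) - intChoose3 (b + 2)) +
       (intChoose3 (c + (2 * (d:ℤ) - (a + b + c + e)) + 2) - intChoose3 (c + 2)) +
       (intChoose3 (e + (2 * (d:ℤ) - (a + b + c + e)) + 2) - intChoose3 (e + 2))))
      = 6 * (intChoose3 (1 + (a + b - (d:ℤ))) + intChoose3 (1 + (a + c - (d:ℤ))) +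
        intChoose3 (1 + (a + e - (d:ℤ))) + intChoose3 (1 + (b + c - (d:ℤ))) +
        intChoose3 (1 + (b + e - (d:ℤ))) + intChoose3 (1 + (c + e - (d:ℤ)))) := by
      linear_combination e1 - e2 - e3 - e4 - e5 - e6 + e7 + e8 + e9 + e10 - f1 - f2 - f3 - f4 - f5 - f6
    linarith
  linarith [hL, key]
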